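/- arXiv:2105.09072 — 5 statements merged into one kernel-verified Lean document; each statement's English description precedes it below -/
import Mathlib

section
/- Let F be a free group with lower central series Γ_1 ⊇ Γ_2 ⊇ ⋯. For an endomorphism f of F and elements x, y of F, define [f,x] := f(x)x⁻¹. If x ∈ Γ_{k-1} and y ∈ F and [f,z] ∈ Γ_{k-1+r} for all z ∈ Γ_{k-1} and [f,w] ∈ Γ_{r+1} for all w ∈ F, then [f,[x,y]] ∈ Γ_{k+r}, where [x,y] = xyx⁻¹y⁻¹ is the group commutator. -/
theorem lcs_comm_le (G : Type*) [Group G] :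
    ∀ n m : ℕ, ⁅(⊤ : Subgroup G).lowerCentralSeries m, (⊤ : Subgroup G).lowerCentralSeries n⁆ ≤
      (⊤ : Subgroup G).lowerCentralSeries (m + n + 1) := by
  intro n
  induction n with
  | zero =>
    intro m
    rw [Subgroup.lowerCentralSeries_zero]
    exact le_of_eq rfl
  | succ n ih =>
    intro m
    set N := (⊤ : Subgroup G).lowerCentralSeries (m + (n + 1) + 1) with hN
    set π := QuotientGroup.mk' N with hπ
    have key : ∀ (H K : Subgroup G), ⁅H, K⁆ ≤ N → ⁅H.map π, K.map π⁆ = ⊥ := by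
      intro H K h
      rw [← Subgroup.map_commutator, Subgroup.map_eq_bot_iff, hπ, QuotientGroup.ker_mk']
      exact h
    have goal' : ⁅((⊤ : Subgroup G).lowerCentralSeries (n+1)).map π, ((⊤ : Subgroup G).lowerCentralSeries m).map π⁆ = ⊥ := by
      rw [show (⊤ : Subgroup G).lowerCentralSeries (n+1) = ⁅(⊤ : Subgroup G).lowerCentralSeries n, ⊤⁆ from rfl,
        Subgroup.map_commutator]
      apply Subgroup.commutator_commutator_eq_bot_of_rotate
      · -- ⁅⁅map ⊤, map (LCS m)⁆, map (LCS n)⁆ = ⊥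
        rw [← Subgroup.map_commutator]
        apply key
        have h1 : ⁅(⊤ : Subgroup G), (⊤ : Subgroup G).lowerCentralSeries m⁆ = (⊤ : Subgroup G).lowerCentralSeries (m + 1) := by
          rw [Subgroup.commutator_comm]; rfl
        rw [h1]
        have := ih (m + 1)
        rwa [show m + 1 + n + 1 = m + (n + 1) + 1 by omega] at this
      ·
        rw [← Subgroup.map_commutator]
        apply key
        calc ⁅⁅(⊤ : Subgroup G).lowerCentralSeries m, (⊤ : Subgroup G).lowerCentralSeries n⁆, ⊤⁆
            ≤ ⁅(⊤ : Subgroup G).lowerCentralSeries (m+n+1), ⊤⁆ := Subgroup.commutator_mono (ih m) le_rfl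
        _ = (⊤ : Subgroup G).lowerCentralSeries (m+n+2) := rfl
        _ = N := by rw [hN, show m+(n+1)+1 = m+n+2 by omega]
    rw [Subgroup.commutator_comm] at goal'
    rw [← Subgroup.map_commutator, Subgroup.map_eq_bot_iff, hπ, QuotientGroup.ker_mk'] at goal'
    exact goal'

/-- Group algebra lemma in the quotient. -/
theorem quot_calc {Q : Type*} [Group Q] (A B X Y : Q)
    (hAX : Commute A X) (hAB : Commute A B) (hAY : Commute A Y)
    (hBX : Commute B X) (hBC : Commute B (X * Y * X⁻¹ * Y⁻¹)) :
    (A * X) * (B * Y) * (A * X)⁻¹ * (B * Y)⁻¹ * (X * Y * X⁻¹ * Y⁻¹)⁻¹ = 1 := by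
  have hW : Commute A (X * B * Y * X⁻¹) :=
    ((hAX.mul_right hAB).mul_right hAY).mul_right hAX.inv_right
  have conj : A * (X * B * Y * X⁻¹) * A⁻¹ = X * B * Y * X⁻¹ := by
    rw [hW.eq, mul_assoc, mul_inv_cancel, mul_one]
  have step1 : (A * X) * (B * Y) * (A * X)⁻¹ * (B * Y)⁻¹
      = (X * B * Y * X⁻¹) * (B * Y)⁻¹ := by
    rw [← conj]; group
  have step2 : (X * B * Y * X⁻¹) * (B * Y)⁻¹ = B * (X * Y * X⁻¹ * Y⁻¹) * B⁻¹ := by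
    rw [show X * B = B * X from hBX.eq.symm]; group
  rw [step1, step2, hBC.eq]
  group

/-- `Gam G k` is the `k`-th term `Γ_k` of the lower central series of `G`
(with the convention `Γ_1 = G`). -/
abbrev Gam (G : Type*) [Group G] (k : ℕ) : Subgroup G := (⊤ : Subgroup G).lowerCentralSeries (k - 1)

/-- If `x ∈ Γ_{k-1}`, `y ∈ F`, `[f,z] ∈ Γ_{k-1+r}` for all `z ∈ Γ_{k-1}` and
`[f,w] ∈ Γ_{r+1}` for all `w`, then `[f,[x,y]] ∈ Γ_{k+r}`, where `[f,x] = f(x)x⁻¹`. -/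
theorem stmt0 (G : Type*) [Group G] (f : G →* G) (k r : ℕ) (hk : 2 ≤ k)
    (x y : G) (hx : x ∈ Gam G (k - 1))
    (hΓ : ∀ z ∈ Gam G (k - 1), f z * z⁻¹ ∈ Gam G (k - 1 + r))
    (hF : ∀ w : G, f w * w⁻¹ ∈ Gam G (r + 1)) :
    f (x * y * x⁻¹ * y⁻¹) * (x * y * x⁻¹ * y⁻¹)⁻¹ ∈ Gam G (k + r) := by
  obtain ⟨m, rfl⟩ : ∃ m, k = m + 2 := ⟨k - 2, by omega⟩
  simp only [Gam, show m + 2 - 1 - 1 = m by omega, show m + 2 - 1 + r - 1 = m + r by omega,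
    show r + 1 - 1 = r by omega, show m + 2 + r - 1 = m + r + 1 by omega] at *
  -- now: hx : x ∈ LCS m, hΓ : ... ∈ LCS (m+r), hF : ... ∈ LCS r, goal ∈ LCS (m+r+1)
  set N := (⊤ : Subgroup G).lowerCentralSeries (m + r + 1) with hN
  set π := (QuotientGroup.mk' N) with hπ
  have hmem : ∀ g : G, g ∈ N → π g = 1 := fun g hg => by
    rwa [hπ, QuotientGroup.mk'_apply, QuotientGroup.eq_one_iff]
  set a := f x * x⁻¹ with ha
  set b := f y * y⁻¹ with hb
  have haM : a ∈ (⊤ : Subgroup G).lowerCentralSeries (m + r) := hΓ x hx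
  have hbM : b ∈ (⊤ : Subgroup G).lowerCentralSeries r := hF y
  -- commuting facts in the quotient
  have hA : ∀ g : G, Commute (π a) (π g) := by
    intro g
    rw [← commutatorElement_eq_one_iff_commute, ← map_commutatorElement]
    exact hmem _ (Subgroup.commutator_mem_commutator haM (Subgroup.mem_top g))
  have hBX : Commute (π b) (π x) := by
    rw [← commutatorElement_eq_one_iff_commute, ← map_commutatorElement]
    refine hmem _ ?_
    have := lcs_comm_le G m r (Subgroup.commutator_mem_commutator hbM hx)
    rwa [show r + m + 1 = m + r + 1 by omega] at this
  have hBC : Commute (π b) (π (x * y * x⁻¹ * y⁻¹)) := by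
    rw [← commutatorElement_eq_one_iff_commute, ← map_commutatorElement]
    refine hmem _ ?_
    have hc : x * y * x⁻¹ * y⁻¹ ∈ (⊤ : Subgroup G).lowerCentralSeries (m + 1) :=
      Subgroup.commutator_mem_commutator hx (Subgroup.mem_top y)
    have := lcs_comm_le G (m + 1) r (Subgroup.commutator_mem_commutator hbM hc)
    exact Subgroup.lowerCentralSeries_antitone (S := ⊤) (by omega) this
  have hfx : π (f x) = π a * π x := by rw [← map_mul, ha, inv_mul_cancel_right]
  have hfy : π (f y) = π b * π y := by rw [← map_mul, hb, inv_mul_cancel_right]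
  rw [show (f (x * y * x⁻¹ * y⁻¹) * (x * y * x⁻¹ * y⁻¹)⁻¹ ∈ N) ↔ _ from
    (QuotientGroup.eq_one_iff _).symm]
  have expand : π (f (x * y * x⁻¹ * y⁻¹) * (x * y * x⁻¹ * y⁻¹)⁻¹)
      = (π a * π x) * (π b * π y) * (π a * π x)⁻¹ * (π b * π y)⁻¹
        * (π x * π y * (π x)⁻¹ * (π y)⁻¹)⁻¹ := by
    simp only [map_mul, map_inv, hfx, hfy]
  have final : π (f (x * y * x⁻¹ * y⁻¹) * (x * y * x⁻¹ * y⁻¹)⁻¹) = 1 := by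
    rw [expand]
    exact quot_calc _ _ _ _ (hA x) (hA (f y * y⁻¹)) (hA y) hBX (by
      simpa only [map_mul, map_inv] using hBC)
  exact final
end

section
/- Let F_n be the free group of rank n with lower central series Γ_*, and 𝔈_r(n) = {f ∈ End(F_n) : f(x)x⁻¹ ∈ Γ_{r+1} for all x}. Define σ(f) by σ(f)(x_i) = x_i f(x_i)⁻¹ x_i. If f ∈ 𝔈_r(n) with r ≥ 1, then σ(f) ∈ 𝔈_r(n) and both compositions f∘σ(f) and σ(f)∘f lie in 𝔈_{2r}(n). -/
/-- The map `σ` on endomorphisms of the free group, determined on generators by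
`σ(f)(x_i) = x_i · f(x_i)⁻¹ · x_i`. -/
def sigmaEnd (n : ℕ) (f : FreeGroup (Fin n) →* FreeGroup (Fin n)) :
    FreeGroup (Fin n) →* FreeGroup (Fin n) :=
  FreeGroup.lift fun i => FreeGroup.of i * (f (FreeGroup.of i))⁻¹ * FreeGroup.of i

section Aux

open Subgroup
open scoped commutatorElement

variable {G : Type*} [Group G]

private lemma lcs_succ (m : ℕ) :
    Subgroup.lowerCentralSeries (⊤ : Subgroup G) (m + 1) = ⁅Subgroup.lowerCentralSeries (⊤ : Subgroup G) m, ⊤⁆ := rfl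

/-- Three subgroups lemma, modulo a normal subgroup. -/
private lemma three_subgroups {H₁ H₂ H₃ N : Subgroup G} [N.Normal]
    (h1 : ⁅⁅H₂, H₃⁆, H₁⁆ ≤ N) (h2 : ⁅⁅H₃, H₁⁆, H₂⁆ ≤ N) : ⁅⁅H₁, H₂⁆, H₃⁆ ≤ N := by
  have key : ∀ {A B C : Subgroup G}, ⁅⁅A, B⁆, C⁆ ≤ N ↔
      ⁅⁅map (QuotientGroup.mk' N) A, map (QuotientGroup.mk' N) B⁆,
        map (QuotientGroup.mk' N) C⁆ = ⊥ := by
    intro A B C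
    rw [← Subgroup.map_commutator, ← Subgroup.map_commutator, Subgroup.map_eq_bot_iff,
      QuotientGroup.ker_mk']
  exact key.mpr (Subgroup.commutator_commutator_eq_bot_of_rotate (key.mp h1) (key.mp h2))

private lemma lcs_comm (i j : ℕ) :
    ⁅Subgroup.lowerCentralSeries (⊤ : Subgroup G) i, Subgroup.lowerCentralSeries (⊤ : Subgroup G) j⁆ ≤ Subgroup.lowerCentralSeries (⊤ : Subgroup G) (i + j + 1) := by
  induction j generalizing i with
  | zero => rw [Subgroup.lowerCentralSeries_zero]; exact (lcs_succ i).symm.le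
  | succ j ih =>
    rw [lcs_succ j, Subgroup.commutator_comm]
    refine three_subgroups ?_ ?_
    · rw [Subgroup.commutator_comm (⊤ : Subgroup G), ← lcs_succ]
      have := ih (i := i + 1)
      refine this.trans (Subgroup.lowerCentralSeries_antitone _ ?_)
      omega
    · refine le_trans (Subgroup.commutator_mono (ih (i := i)) le_rfl) ?_
      rw [← lcs_succ]
      exact Subgroup.lowerCentralSeries_antitone _ (by omega)

/-- The set of `c` with `f c * c⁻¹ ∈ N` is a subgroup when `N` is normal. -/
private def devSubgroup (f : G →* G) (N : Subgroup G) [hN : N.Normal] : Subgroup G where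
  carrier := {c | f c * c⁻¹ ∈ N}
  one_mem' := by simpa using N.one_mem
  mul_mem' := by
    intro a b ha hb
    simp only [Set.mem_setOf_eq] at *
    have : f (a * b) * (a * b)⁻¹ = (f a * a⁻¹) * (a * (f b * b⁻¹) * a⁻¹) := by
      rw [map_mul]; group
    rw [this]
    exact N.mul_mem ha (hN.conj_mem _ hb a)
  inv_mem' := by
    intro a ha
    simp only [Set.mem_setOf_eq] at *
    have : f a⁻¹ * (a⁻¹)⁻¹ = a⁻¹ * (f a * a⁻¹)⁻¹ * (a⁻¹)⁻¹ := by
      rw [map_inv]; group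
    rw [this]
    exact hN.conj_mem _ (N.inv_mem ha) a⁻¹

private lemma mem_devSubgroup {f : G →* G} {N : Subgroup G} [N.Normal] {c : G} :
    c ∈ devSubgroup f N ↔ f c * c⁻¹ ∈ N := Iff.rfl

/-- Key lemma: if `f` acts trivially mod `Γ_{r+1}`, then for `c ∈ Γ_{s+1}` one has
`f(c)c⁻¹ ∈ Γ_{r+s+1}`. (Here `Subgroup.lowerCentralSeries (⊤ : Subgroup G) m = Γ_{m+1}`.) -/
private lemma key_lemma (f : G →* G) (r : ℕ)
    (hf : ∀ x, f x * x⁻¹ ∈ Subgroup.lowerCentralSeries (⊤ : Subgroup G) r) :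
    ∀ s, ∀ c ∈ Subgroup.lowerCentralSeries (⊤ : Subgroup G) s, f c * c⁻¹ ∈ Subgroup.lowerCentralSeries (⊤ : Subgroup G) (r + s) := by
  intro s
  induction s with
  | zero => intro c _; exact hf c
  | succ s ih =>
    have hsub : Subgroup.lowerCentralSeries (⊤ : Subgroup G) (s + 1) ≤
        devSubgroup f (Subgroup.lowerCentralSeries (⊤ : Subgroup G) (r + s + 1)) := by
      rw [lcs_succ, Subgroup.commutator_le]
      intro a ha y _
      rw [mem_devSubgroup]
      have hu : f a * a⁻¹ ∈ Subgroup.lowerCentralSeries (⊤ : Subgroup G) (r + s) := ih a ha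
      have hv : f y * y⁻¹ ∈ Subgroup.lowerCentralSeries (⊤ : Subgroup G) r := hf y
      set u := f a * a⁻¹ with hudef
      set v := f y * y⁻¹ with hvdef
      have hfa : f a = u * a := by rw [hudef]; group
      have hfy : f y = v * y := by rw [hvdef]; group
      have hiden : f ⁅a, y⁆ * ⁅a, y⁆⁻¹ =
          (u * ⁅a, v⁆ * u⁻¹) * ⁅u * v, ⁅a, y⁆⁆ * (⁅a, y⁆ * ⁅u, v * y⁆ * ⁅a, y⁆⁻¹) := by
        rw [map_commutatorElement, hfa, hfy]
        simp only [commutatorElement_def]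
        group
      rw [hiden]
      set N := Subgroup.lowerCentralSeries (⊤ : Subgroup G) (r + s + 1) with hNdef
      have hNnormal : N.Normal := by rw [hNdef]; infer_instance
      refine N.mul_mem (N.mul_mem ?_ ?_) ?_
      · refine hNnormal.conj_mem _ ?_ u
        have : ⁅a, v⁆ ∈ ⁅Subgroup.lowerCentralSeries (⊤ : Subgroup G) s, Subgroup.lowerCentralSeries (⊤ : Subgroup G) r⁆ :=
          Subgroup.commutator_mem_commutator ha hv
        refine (lcs_comm s r).trans (le_of_eq ?_) this
        rw [hNdef]; ring_nf
      · have huv : u * v ∈ Subgroup.lowerCentralSeries (⊤ : Subgroup G) r :=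
          Subgroup.mul_mem _ (Subgroup.lowerCentralSeries_antitone _ (Nat.le_add_right r s) hu) hv
        have hay : ⁅a, y⁆ ∈ Subgroup.lowerCentralSeries (⊤ : Subgroup G) (s + 1) := by
          rw [lcs_succ]
          exact Subgroup.commutator_mem_commutator ha (Subgroup.mem_top y)
        have : ⁅u * v, ⁅a, y⁆⁆ ∈ ⁅Subgroup.lowerCentralSeries (⊤ : Subgroup G) r, Subgroup.lowerCentralSeries (⊤ : Subgroup G) (s + 1)⁆ :=
          Subgroup.commutator_mem_commutator huv hay
        exact (lcs_comm r (s + 1)).trans (Subgroup.lowerCentralSeries_antitone _ (by omega)) this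
      · refine hNnormal.conj_mem _ ?_ ⁅a, y⁆
        have : ⁅u, v * y⁆ ∈ ⁅Subgroup.lowerCentralSeries (⊤ : Subgroup G) (r + s), ⊤⁆ :=
          Subgroup.commutator_mem_commutator hu (Subgroup.mem_top _)
        rw [← lcs_succ] at this
        exact this
    intro c hc
    exact hsub hc

end Aux

private lemma forall_of_gen {n : ℕ} (g : FreeGroup (Fin n) →* FreeGroup (Fin n))
    (N : Subgroup (FreeGroup (Fin n))) [N.Normal]
    (h : ∀ i, g (FreeGroup.of i) * (FreeGroup.of i)⁻¹ ∈ N) :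
    ∀ x, g x * x⁻¹ ∈ N := by
  intro x
  have htop : (⊤ : Subgroup (FreeGroup (Fin n))) ≤ devSubgroup g N := by
    rw [← FreeGroup.closure_range_of, Subgroup.closure_le]
    rintro _ ⟨i, rfl⟩
    exact h i
  exact htop (Subgroup.mem_top x)

/-- If `f ∈ 𝔈_r(n)` with `r ≥ 1`, then `σ(f) ∈ 𝔈_r(n)` and both
`f ∘ σ(f)` and `σ(f) ∘ f` lie in `𝔈_{2r}(n)`. -/
theorem stmt4 (n r : ℕ) (hr : 1 ≤ r)
    (f : FreeGroup (Fin n) →* FreeGroup (Fin n))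
    (hf : ∀ x : FreeGroup (Fin n), f x * x⁻¹ ∈ Gam (FreeGroup (Fin n)) (r + 1)) :
    (∀ x : FreeGroup (Fin n),
        sigmaEnd n f x * x⁻¹ ∈ Gam (FreeGroup (Fin n)) (r + 1)) ∧
    (∀ x : FreeGroup (Fin n),
        (f.comp (sigmaEnd n f)) x * x⁻¹ ∈ Gam (FreeGroup (Fin n)) (2 * r + 1)) ∧
    (∀ x : FreeGroup (Fin n),
        ((sigmaEnd n f).comp f) x * x⁻¹ ∈ Gam (FreeGroup (Fin n)) (2 * r + 1)) := by
  set F := FreeGroup (Fin n)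
  have hf' : ∀ x : F, f x * x⁻¹ ∈ Subgroup.lowerCentralSeries (⊤ : Subgroup F) r := hf
  -- generator identity for σ(f)
  have hgen : ∀ i : Fin n,
      sigmaEnd n f (FreeGroup.of i) * (FreeGroup.of i)⁻¹ =
        (f (FreeGroup.of i) * (FreeGroup.of i)⁻¹)⁻¹ := by
    intro i
    simp only [sigmaEnd, FreeGroup.lift_apply_of]
    group
  have part1 : ∀ x : F, sigmaEnd n f x * x⁻¹ ∈ Subgroup.lowerCentralSeries (⊤ : Subgroup F) r := by
    refine forall_of_gen _ _ (fun i => ?_)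
    rw [hgen i]
    exact Subgroup.inv_mem _ (hf' _)
  have part2 : ∀ x : F,
      (f.comp (sigmaEnd n f)) x * x⁻¹ ∈ Subgroup.lowerCentralSeries (⊤ : Subgroup F) (r + r) := by
    refine forall_of_gen _ _ (fun i => ?_)
    set x := FreeGroup.of i with hxdef
    have hc : f x * x⁻¹ ∈ Subgroup.lowerCentralSeries (⊤ : Subgroup F) r := hf' x
    have hkey : f (f x * x⁻¹) * (f x * x⁻¹)⁻¹ ∈ Subgroup.lowerCentralSeries (⊤ : Subgroup F) (r + r) :=
      key_lemma f r hf' r _ hc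
    have hid : (f.comp (sigmaEnd n f)) x * x⁻¹ =
        (f (f x * x⁻¹))⁻¹ * (f (f x * x⁻¹) * (f x * x⁻¹)⁻¹)⁻¹ * ((f (f x * x⁻¹))⁻¹)⁻¹ := by
      simp only [MonoidHom.comp_apply, hxdef, sigmaEnd, FreeGroup.lift_apply_of, map_mul, map_inv]
      group
    rw [hid]
    have : (Subgroup.lowerCentralSeries (⊤ : Subgroup F) (r + r)).Normal := inferInstance
    exact this.conj_mem _ (Subgroup.inv_mem _ hkey) _
  have part3 : ∀ x : F,
      ((sigmaEnd n f).comp f) x * x⁻¹ ∈ Subgroup.lowerCentralSeries (⊤ : Subgroup F) (r + r) := by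
    refine forall_of_gen _ _ (fun i => ?_)
    set x := FreeGroup.of i with hxdef
    have hc : f x * x⁻¹ ∈ Subgroup.lowerCentralSeries (⊤ : Subgroup F) r := hf' x
    have hkey : sigmaEnd n f (f x * x⁻¹) * (f x * x⁻¹)⁻¹ ∈ Subgroup.lowerCentralSeries (⊤ : Subgroup F) (r + r) :=
      key_lemma (sigmaEnd n f) r part1 r _ hc
    have hid : ((sigmaEnd n f).comp f) x * x⁻¹ =
        sigmaEnd n f (f x * x⁻¹) * (sigmaEnd n f x * x⁻¹) := by
      simp only [MonoidHom.comp_apply, map_mul, map_inv]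
      group
    rw [hid, hxdef, hgen i, ← hxdef]
    exact hkey
  refine ⟨part1, ?_, ?_⟩
  · intro x
    have : (2 : ℕ) * r + 1 - 1 = r + r := by omega
    show _ ∈ Subgroup.lowerCentralSeries (⊤ : Subgroup F) (2 * r + 1 - 1)
    rw [this]
    exact part2 x
  · intro x
    have : (2 : ℕ) * r + 1 - 1 = r + r := by omega
    show _ ∈ Subgroup.lowerCentralSeries (⊤ : Subgroup F) (2 * r + 1 - 1)
    rw [this]
    exact part3 x
end

section
/- Let F_n be a free group of rank n ≥ 1, H = F_n/Γ_2 its abelianization, and Lie_{r+1}(n) = Γ_{r+1}/Γ_{r+2}. The r-th Johnson homomorphism τ̃_r : 𝔈_r(n)/∼_{r+1} → Hom(H, Lie_{r+1}(n)), induced by f ↦ (xΓ_2 ↦ f(x)x⁻¹Γ_{r+2}), is a surjective group homomorphism; hence an isomorphism of abelian groups. -/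
namespace Johnson

variable {G : Type*} [Group G]

open scoped commutatorElement

/-- elements of `Γ_{k+1}` are central in `G/Γ_{k+2}`. -/
lemma central_mk (k : ℕ) {a : G} (ha : a ∈ (⊤ : Subgroup G).lowerCentralSeries k) (x : G) :
    (QuotientGroup.mk a : G ⧸ (⊤ : Subgroup G).lowerCentralSeries (k + 1)) * QuotientGroup.mk x
      = QuotientGroup.mk x * QuotientGroup.mk a := by
  rw [← QuotientGroup.mk_mul, ← QuotientGroup.mk_mul, QuotientGroup.eq]
  have h : ⁅a⁻¹, x⁻¹⁆ ∈ (⊤ : Subgroup G).lowerCentralSeries (k + 1) := by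
    rw [Subgroup.lowerCentralSeries_succ]
    exact Subgroup.commutator_mem_commutator (inv_mem ha) (Subgroup.mem_top x⁻¹)
  have he : (a * x)⁻¹ * (x * a) = ⁅a⁻¹, x⁻¹⁆⁻¹ := by
    simp only [commutatorElement_def]; group
  rw [he]
  exact inv_mem h

/-- the Johnson difference map is multiplicative. -/
lemma d_mul (k : ℕ) (f : G →* G) (hf : ∀ x, f x * x⁻¹ ∈ (⊤ : Subgroup G).lowerCentralSeries k) (x y : G) :
    (QuotientGroup.mk (f (x * y) * (x * y)⁻¹) : G ⧸ (⊤ : Subgroup G).lowerCentralSeries (k + 1)) =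
      QuotientGroup.mk (f x * x⁻¹) * QuotientGroup.mk (f y * y⁻¹) := by
  have h1 : f (x * y) * (x * y)⁻¹ = (f x * x⁻¹) * (x * (f y * y⁻¹) * x⁻¹) := by
    rw [map_mul]; group
  have h2 : (QuotientGroup.mk (x * (f y * y⁻¹) * x⁻¹) :
      G ⧸ (⊤ : Subgroup G).lowerCentralSeries (k + 1)) = QuotientGroup.mk (f y * y⁻¹) := by
    rw [QuotientGroup.mk_mul, QuotientGroup.mk_mul, ← central_mk k (hf y) x,
      mul_assoc, ← QuotientGroup.mk_mul, mul_inv_cancel, QuotientGroup.mk_one, mul_one]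
  rw [h1, QuotientGroup.mk_mul, h2]

/-- the Johnson difference map, as a homomorphism `G → G/Γ_{k+2}`. -/
noncomputable def D (k : ℕ) (f : G →* G)
    (hf : ∀ x, f x * x⁻¹ ∈ (⊤ : Subgroup G).lowerCentralSeries k) :
    G →* G ⧸ (⊤ : Subgroup G).lowerCentralSeries (k + 1) :=
  MonoidHom.mk' (fun x => QuotientGroup.mk (f x * x⁻¹)) (d_mul k f hf)

lemma D_apply (k : ℕ) (f : G →* G) (hf : ∀ x, f x * x⁻¹ ∈ (⊤ : Subgroup G).lowerCentralSeries k) (x : G) :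
    D k f hf x = QuotientGroup.mk (f x * x⁻¹) := rfl

/-- the Johnson difference map kills the commutator subgroup. -/
lemma ker_D (k : ℕ) (f : G →* G) (hf : ∀ x, f x * x⁻¹ ∈ (⊤ : Subgroup G).lowerCentralSeries k) :
    (⊤ : Subgroup G).lowerCentralSeries 1 ≤ (D k f hf).ker := by
  rw [Subgroup.top_lowerCentralSeries_one, commutator_def, Subgroup.commutator_le]
  intro g₁ _ g₂ _
  rw [MonoidHom.mem_ker, map_commutatorElement, commutatorElement_eq_one_iff_mul_comm,
    D_apply, D_apply]
  exact central_mk k (hf g₁) _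

lemma d_congr (k : ℕ) (f : G →* G) (hf : ∀ x, f x * x⁻¹ ∈ (⊤ : Subgroup G).lowerCentralSeries k)
    (x y : G) (hxy : x⁻¹ * y ∈ (⊤ : Subgroup G).lowerCentralSeries 1) :
    (QuotientGroup.mk (f x * x⁻¹) : G ⧸ (⊤ : Subgroup G).lowerCentralSeries (k + 1)) =
      QuotientGroup.mk (f y * y⁻¹) := by
  have h1 : D k f hf (x⁻¹ * y) = 1 := ker_D k f hf hxy
  have h2 : D k f hf y = D k f hf x * D k f hf (x⁻¹ * y) := by
    rw [← map_mul]; congr 1; group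
  rw [h1, mul_one] at h2
  exact h2.symm

end Johnson

/-- The `r`-th Johnson homomorphism of `End(F_n)`,
`τ̃_r : 𝔈_r(n)/∼_{r+1} → Hom(H, Lie_{r+1}(n))`, `f ↦ (xΓ_2 ↦ f(x)x⁻¹Γ_{r+2})`,
is a well-defined surjective group homomorphism, hence an isomorphism of abelian groups.
Here `H = F_n/Γ_2`, and `Lie_{r+1}(n) = Γ_{r+1}/Γ_{r+2}` is identified with the image of
`Γ_{r+1}` in `F_n/Γ_{r+2}`.  The four clauses state that for `f ∈ 𝔈_r(n)`:
`f(x)x⁻¹ mod Γ_{r+2}` depends only on `x mod Γ_2`; the resulting map `H → Lie_{r+1}(n)`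
is a group homomorphism; `τ̃_r` is multiplicative (a monoid homomorphism into the abelian
group `Hom(H, Lie_{r+1}(n))`); and `τ̃_r` is surjective.  (Injectivity of `τ̃_r` holds by
the very definition of the equivalence relation `∼_{r+1}`.) -/
theorem stmt7 (n r : ℕ) (hn : 1 ≤ n) (hr : 1 ≤ r) :
    (∀ f : FreeGroup (Fin n) →* FreeGroup (Fin n),
      (∀ x, f x * x⁻¹ ∈ Gam (FreeGroup (Fin n)) (r + 1)) →
      ∀ x y : FreeGroup (Fin n), x⁻¹ * y ∈ Gam (FreeGroup (Fin n)) 2 →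
        (QuotientGroup.mk (f x * x⁻¹) :
            FreeGroup (Fin n) ⧸ Gam (FreeGroup (Fin n)) (r + 2)) =
          QuotientGroup.mk (f y * y⁻¹)) ∧
    (∀ f : FreeGroup (Fin n) →* FreeGroup (Fin n),
      (∀ x, f x * x⁻¹ ∈ Gam (FreeGroup (Fin n)) (r + 1)) →
      ∀ x y : FreeGroup (Fin n),
        (QuotientGroup.mk (f (x * y) * (x * y)⁻¹) :
            FreeGroup (Fin n) ⧸ Gam (FreeGroup (Fin n)) (r + 2)) =
          QuotientGroup.mk (f x * x⁻¹) * QuotientGroup.mk (f y * y⁻¹)) ∧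
    (∀ f g : FreeGroup (Fin n) →* FreeGroup (Fin n),
      (∀ x, f x * x⁻¹ ∈ Gam (FreeGroup (Fin n)) (r + 1)) →
      (∀ x, g x * x⁻¹ ∈ Gam (FreeGroup (Fin n)) (r + 1)) →
      ∀ x : FreeGroup (Fin n),
        (QuotientGroup.mk (f (g x) * x⁻¹) :
            FreeGroup (Fin n) ⧸ Gam (FreeGroup (Fin n)) (r + 2)) =
          QuotientGroup.mk (f x * x⁻¹) * QuotientGroup.mk (g x * x⁻¹)) ∧
    (∀ φ : (FreeGroup (Fin n) ⧸ Gam (FreeGroup (Fin n)) 2) →*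
        (FreeGroup (Fin n) ⧸ Gam (FreeGroup (Fin n)) (r + 2)),
      (∀ a, φ a ∈ (Gam (FreeGroup (Fin n)) (r + 1)).map
          (QuotientGroup.mk' (Gam (FreeGroup (Fin n)) (r + 2)))) →
      ∃ f : FreeGroup (Fin n) →* FreeGroup (Fin n),
        (∀ x, f x * x⁻¹ ∈ Gam (FreeGroup (Fin n)) (r + 1)) ∧
        ∀ x : FreeGroup (Fin n),
          (QuotientGroup.mk (f x * x⁻¹) :
              FreeGroup (Fin n) ⧸ Gam (FreeGroup (Fin n)) (r + 2)) =
            φ (QuotientGroup.mk x)) := by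
  refine ⟨?_, ?_, ?_, ?_⟩
  · -- (1) well-definedness
    intro f hf x y hxy
    exact Johnson.d_congr r f hf x y hxy
  · -- (2) homomorphism property
    intro f hf x y
    exact Johnson.d_mul r f hf x y
  · -- (3) multiplicativity of τ̃
    intro f g hf hg x
    have h1 : f (g x) * x⁻¹ = (f (g x) * (g x)⁻¹) * (g x * x⁻¹) := by group
    have h2 : x⁻¹ * g x ∈ (⊤ : Subgroup (FreeGroup (Fin n))).lowerCentralSeries 1 := by
      have hm : g x * x⁻¹ ∈ (⊤ : Subgroup (FreeGroup (Fin n))).lowerCentralSeries 1 :=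
        (⊤ : Subgroup (FreeGroup (Fin n))).lowerCentralSeries_antitone hr (hg x)
      have he : x⁻¹ * g x = x⁻¹ * (g x * x⁻¹) * x⁻¹⁻¹ := by group
      rw [he]
      exact (inferInstance : ((⊤ : Subgroup (FreeGroup (Fin n))).lowerCentralSeries 1).Normal).conj_mem _ hm _
    have h3 : (g x)⁻¹ * x ∈ (⊤ : Subgroup (FreeGroup (Fin n))).lowerCentralSeries 1 := by
      have he : (g x)⁻¹ * x = (x⁻¹ * g x)⁻¹ := by group
      rw [he]; exact inv_mem h2
    have h4 := Johnson.d_congr r f hf (g x) x h3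
    show (QuotientGroup.mk (f (g x) * x⁻¹) :
        FreeGroup (Fin n) ⧸ (⊤ : Subgroup (FreeGroup (Fin n))).lowerCentralSeries (r + 1)) = _
    rw [h1, QuotientGroup.mk_mul, h4]
    rfl
  · -- (4) surjectivity
    intro φ hφ
    set F := FreeGroup (Fin n)
    have hchoice : ∀ i : Fin n, ∃ s : F, s ∈ (⊤ : Subgroup F).lowerCentralSeries r ∧
        (QuotientGroup.mk s : F ⧸ (⊤ : Subgroup F).lowerCentralSeries (r + 1)) =
          φ (QuotientGroup.mk (FreeGroup.of i)) := by
      intro i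
      obtain ⟨s, hs, hs2⟩ := Subgroup.mem_map.mp (hφ (QuotientGroup.mk (FreeGroup.of i)))
      exact ⟨s, hs, hs2⟩
    choose t ht hteq using hchoice
    set f : F →* F := FreeGroup.lift (fun i => t i * FreeGroup.of i) with hfdef
    have hfof : ∀ i, f (FreeGroup.of i) = t i * FreeGroup.of i := fun i =>
      FreeGroup.lift_apply_of
    have hfofd : ∀ i, f (FreeGroup.of i) * (FreeGroup.of i)⁻¹ = t i := by
      intro i; rw [hfof]; group
    have hmem : ∀ x : F, f x * x⁻¹ ∈ (⊤ : Subgroup F).lowerCentralSeries r := by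
      intro x
      induction x using FreeGroup.induction_on with
      | C1 => simpa using Subgroup.one_mem _
      | of i =>
        show f (FreeGroup.of i) * (FreeGroup.of i)⁻¹ ∈ (⊤ : Subgroup F).lowerCentralSeries r
        rw [hfofd]
        exact ht i
      | inv_of i ih =>
        show f (FreeGroup.of i)⁻¹ * ((FreeGroup.of i)⁻¹)⁻¹ ∈ (⊤ : Subgroup F).lowerCentralSeries r
        have ih' : f (FreeGroup.of i) * (FreeGroup.of i)⁻¹ ∈ (⊤ : Subgroup F).lowerCentralSeries r := by
          rw [hfofd]; exact ht i
        have h1 : f (FreeGroup.of i)⁻¹ * ((FreeGroup.of i)⁻¹)⁻¹ =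
            (FreeGroup.of i)⁻¹ * (f (FreeGroup.of i) * (FreeGroup.of i)⁻¹)⁻¹ *
              ((FreeGroup.of i)⁻¹)⁻¹ := by
          rw [map_inv, mul_inv_rev, inv_inv, inv_mul_cancel_left]
        rw [h1]
        exact (inferInstance : ((⊤ : Subgroup F).lowerCentralSeries r).Normal).conj_mem _ (inv_mem ih') _
      | mul x y ihx ihy =>
        have h1 : f (x * y) * (x * y)⁻¹ =
            (f x * x⁻¹) * (x * (f y * y⁻¹) * x⁻¹) := by
          rw [map_mul]; group
        rw [h1]
        exact mul_mem ihx ((inferInstance : ((⊤ : Subgroup F).lowerCentralSeries r).Normal).conj_mem _ ihy _)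
    refine ⟨f, hmem, ?_⟩
    have key : Johnson.D r f hmem =
        φ.comp (QuotientGroup.mk' (Gam F 2)) := by
      apply FreeGroup.ext_hom
      intro i
      rw [Johnson.D_apply, hfofd, hteq]
      rfl
    intro x
    have h5 := congrArg (fun h : F →* F ⧸ (⊤ : Subgroup F).lowerCentralSeries (r + 1) => h x) key
    exact h5
end

section
/- Let F_n be a free group and suppose f is an endomorphism with f(x_i) = c_i · x_i for fixed elements c_i ∈ Γ_{r+1} on each generator x_i. Then for every x ∈ F_n, the class of f(x)x⁻¹ in Γ_{r+1}/Γ_{r+2} depends only on the image of x in H = F_n/Γ_2, and the map H → Γ_{r+1}/Γ_{r+2}, xΓ_2 ↦ f(x)x⁻¹Γ_{r+2}, is a group homomorphism. -/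
/-- The endomorphism of the free group determined by `f(x_i) = c_i · x_i`. -/
def fEnd (n : ℕ) (c : Fin n → FreeGroup (Fin n)) :
    FreeGroup (Fin n) →* FreeGroup (Fin n) :=
  FreeGroup.lift fun i => c i * FreeGroup.of i

open scoped commutatorElement

section aux
variable {n r : ℕ} {c : Fin n → FreeGroup (Fin n)}

private lemma defect_mem (hc : ∀ i, c i ∈ (⊤ : Subgroup (FreeGroup (Fin n))).lowerCentralSeries r)
    (x : FreeGroup (Fin n)) :
    fEnd n c x * x⁻¹ ∈ (⊤ : Subgroup (FreeGroup (Fin n))).lowerCentralSeries r := by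
  set N := (⊤ : Subgroup (FreeGroup (Fin n))).lowerCentralSeries r with hN
  induction x using FreeGroup.induction_on with
  | C1 => simpa using one_mem N
  | of i =>
      have h : fEnd n c (FreeGroup.of i) = c i * FreeGroup.of i := FreeGroup.lift_apply_of
      rw [h]
      simpa using hc i
  | inv_of i _ =>
      have h : fEnd n c (FreeGroup.of i) = c i * FreeGroup.of i := FreeGroup.lift_apply_of
      have h2 : fEnd n c (FreeGroup.of i)⁻¹ * ((FreeGroup.of i : FreeGroup (Fin n))⁻¹)⁻¹ =
          (FreeGroup.of i : FreeGroup (Fin n))⁻¹ * (c i)⁻¹ * ((FreeGroup.of i : FreeGroup (Fin n))⁻¹)⁻¹ := by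
        rw [map_inv, h]; group
      rw [h2]
      exact (Subgroup.lowerCentralSeries_normal _ _).conj_mem _ (inv_mem (hc i)) _
  | mul x y hx hy =>
      have h : fEnd n c (x * y) * (x * y)⁻¹ =
          (fEnd n c x * x⁻¹) * (x * (fEnd n c y * y⁻¹) * x⁻¹) := by
        rw [map_mul]; group
      rw [h]
      exact mul_mem hx ((Subgroup.lowerCentralSeries_normal _ _).conj_mem _ hy _)

private lemma defect_hom (hc : ∀ i, c i ∈ (⊤ : Subgroup (FreeGroup (Fin n))).lowerCentralSeries r)
    (x y : FreeGroup (Fin n)) :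
    (QuotientGroup.mk (fEnd n c (x * y) * (x * y)⁻¹) :
        FreeGroup (Fin n) ⧸ (⊤ : Subgroup (FreeGroup (Fin n))).lowerCentralSeries (r + 1)) =
      QuotientGroup.mk (fEnd n c x * x⁻¹) * QuotientGroup.mk (fEnd n c y * y⁻¹) := by
  have hD := defect_mem hc y
  rw [← QuotientGroup.mk_mul, QuotientGroup.eq]
  have key : (fEnd n c (x * y) * (x * y)⁻¹)⁻¹ *
      (fEnd n c x * x⁻¹ * (fEnd n c y * y⁻¹)) = ⁅x, (fEnd n c y * y⁻¹)⁻¹⁆ := by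
    rw [map_mul, commutatorElement_def]; group
  rw [key, ← commutatorElement_inv]
  have : (⊤ : Subgroup (FreeGroup (Fin n))).lowerCentralSeries (r + 1) =
      ⁅(⊤ : Subgroup (FreeGroup (Fin n))).lowerCentralSeries r, ⊤⁆ := rfl
  rw [this]
  exact inv_mem (Subgroup.commutator_mem_commutator (inv_mem hD) (Subgroup.mem_top x))
end aux

/-- If `f(x_i) = c_i x_i` with `c_i ∈ Γ_{r+1}`, then `f(x)x⁻¹ ∈ Γ_{r+1}` for every `x`,
the class of `f(x)x⁻¹` in `Γ_{r+1}/Γ_{r+2}` depends only on the image of `x` in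
`H = F_n/Γ_2`, and the map `xΓ_2 ↦ f(x)x⁻¹ Γ_{r+2}` is a group homomorphism. -/
theorem stmt8 (n r : ℕ) (hr : 1 ≤ r) (c : Fin n → FreeGroup (Fin n))
    (hc : ∀ i, c i ∈ Gam (FreeGroup (Fin n)) (r + 1)) :
    (∀ x : FreeGroup (Fin n),
        fEnd n c x * x⁻¹ ∈ Gam (FreeGroup (Fin n)) (r + 1)) ∧
    (∀ x y : FreeGroup (Fin n), x⁻¹ * y ∈ Gam (FreeGroup (Fin n)) 2 →
        (QuotientGroup.mk (fEnd n c x * x⁻¹) :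
            FreeGroup (Fin n) ⧸ Gam (FreeGroup (Fin n)) (r + 2)) =
          QuotientGroup.mk (fEnd n c y * y⁻¹)) ∧
    (∀ x y : FreeGroup (Fin n),
        (QuotientGroup.mk (fEnd n c (x * y) * (x * y)⁻¹) :
            FreeGroup (Fin n) ⧸ Gam (FreeGroup (Fin n)) (r + 2)) =
          QuotientGroup.mk (fEnd n c x * x⁻¹) * QuotientGroup.mk (fEnd n c y * y⁻¹)) := by
  have hc' : ∀ i, c i ∈ (⊤ : Subgroup (FreeGroup (Fin n))).lowerCentralSeries r := hc
  have hhom : ∀ a b : FreeGroup (Fin n),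
      (QuotientGroup.mk (fEnd n c (a * b) * (a * b)⁻¹) :
          FreeGroup (Fin n) ⧸ Gam (FreeGroup (Fin n)) (r + 2)) =
        QuotientGroup.mk (fEnd n c a * a⁻¹) * QuotientGroup.mk (fEnd n c b * b⁻¹) :=
    fun a b => defect_hom hc' a b
  refine ⟨fun x => defect_mem hc' x, ?_, hhom⟩
  intro x y hxy
  -- the map vanishes on Γ₂
  have hker : ∀ z ∈ Gam (FreeGroup (Fin n)) 2,
      (QuotientGroup.mk (fEnd n c z * z⁻¹) :
        FreeGroup (Fin n) ⧸ Gam (FreeGroup (Fin n)) (r + 2)) = 1 := by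
    let φ : FreeGroup (Fin n) →* FreeGroup (Fin n) ⧸ Gam (FreeGroup (Fin n)) (r + 2) :=
      { toFun := fun z => QuotientGroup.mk (fEnd n c z * z⁻¹)
        map_one' := by simp
        map_mul' := hhom }
    have hle : Gam (FreeGroup (Fin n)) 2 ≤ φ.ker := by
      have h1 : Gam (FreeGroup (Fin n)) 2 =
          ⁅(⊤ : Subgroup (FreeGroup (Fin n))), ⊤⁆ := rfl
      rw [h1, Subgroup.commutator_le]
      intro g _ h _
      have hcomm : φ ⁅g, h⁆ = ⁅φ g, φ h⁆ := map_commutatorElement φ g h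
      have hφg : φ g = QuotientGroup.mk (fEnd n c g * g⁻¹) := rfl
      have hφh : φ h = QuotientGroup.mk (fEnd n c h * h⁻¹) := rfl
      rw [MonoidHom.mem_ker, hcomm, hφg, hφh]
      have : (⁅(QuotientGroup.mk (fEnd n c g * g⁻¹) :
          FreeGroup (Fin n) ⧸ Gam (FreeGroup (Fin n)) (r + 2)),
          QuotientGroup.mk (fEnd n c h * h⁻¹)⁆) =
          QuotientGroup.mk ⁅fEnd n c g * g⁻¹, fEnd n c h * h⁻¹⁆ :=
        (map_commutatorElement (QuotientGroup.mk' _) _ _).symm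
      rw [this, QuotientGroup.eq_one_iff]
      have hmem : ⁅fEnd n c g * g⁻¹, fEnd n c h * h⁻¹⁆ ∈
          ⁅(⊤ : Subgroup (FreeGroup (Fin n))).lowerCentralSeries r, (⊤ : Subgroup (FreeGroup (Fin n)))⁆ :=
        Subgroup.commutator_mem_commutator (defect_mem hc' g) (Subgroup.mem_top _)
      exact hmem
    exact fun z hz => hle hz
  have h1 := hker _ hxy
  have h2 := hhom x (x⁻¹ * y)
  rw [h1, mul_one] at h2
  simpa using h2.symm
end

section
/- Let d ≥ 2. Define the bipartite graph G_d with vertex set X_d ∪ Y_d, where X_d = {2λ : λ ⊢ d, λ ≠ (d)} (partitions of 2d with all parts even, other than (2d)) and Y_d = {μ ⊢ 2d−1 : μ has exactly 3 odd parts}, with an edge between 2λ and μ whenever μ is obtained from 2λ by removing one box from each of two different rows and adding one box to another row (yielding a valid partition). Then G_d is connected. -/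
/-- `X d`: partitions of `2d` with all parts even, other than the single-row
partition `(2d)` (i.e. partitions `2λ` for `λ ⊢ d`, `λ ≠ (d)`). -/
def Xv (d : ℕ) : Type :=
  {p : Nat.Partition (2 * d) // (∀ i ∈ p.parts, Even i) ∧ p.parts ≠ {2 * d}}

/-- `Y d`: partitions of `2d − 1` with exactly 3 odd parts. -/
def Yv (d : ℕ) : Type :=
  {q : Nat.Partition (2 * d - 1) // Multiset.countP (fun i => Odd i) q.parts = 3}

/-- `μ` is obtained from the even partition `x` by removing one box from each of two
different rows and adding one box to another row (possibly creating a new row of size 1). -/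
def moveRel (d : ℕ) (x : Xv d) (y : Yv d) : Prop :=
  ∃ (a b : ℕ) (s : Multiset ℕ), x.1.parts = a ::ₘ b ::ₘ s ∧
    ((∃ c ∈ s, y.1.parts = (a - 1) ::ₘ (b - 1) ::ₘ (c + 1) ::ₘ s.erase c) ∨
      y.1.parts = (a - 1) ::ₘ (b - 1) ::ₘ 1 ::ₘ s)

/-- The bipartite graph `G_d` on `X_d ⊕ Y_d` with an edge between `2λ` and `μ`
whenever `μ` is obtained from `2λ` by a box move as above. -/
def Gd (d : ℕ) : SimpleGraph (Xv d ⊕ Yv d) where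
  Adj u v :=
    (∃ x y, u = Sum.inl x ∧ v = Sum.inr y ∧ moveRel d x y) ∨
    (∃ x y, u = Sum.inr y ∧ v = Sum.inl x ∧ moveRel d x y)
  symm := by
    constructor
    intro u v h
    rcases h with ⟨x, y, hu, hv, h⟩ | ⟨x, y, hu, hv, h⟩
    · exact Or.inr ⟨x, y, hv, hu, h⟩
    · exact Or.inl ⟨x, y, hv, hu, h⟩
  loopless := by
    constructor
    intro u h
    rcases h with ⟨x, y, hu, hv, _⟩ | ⟨x, y, hu, hv, _⟩ <;> subst hu <;>
      cases hv

namespace Stmt11Aux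
open Multiset

def mkX (d : ℕ) (s : Multiset ℕ) (hpos : ∀ i ∈ s, 0 < i) (hsum : s.sum = 2 * d)
    (heven : ∀ i ∈ s, Even i) (hne : s ≠ {2 * d}) : Xv d :=
  ⟨⟨s, fun h => hpos _ h, hsum⟩, heven, hne⟩

def mkY (d : ℕ) (s : Multiset ℕ) (hpos : ∀ i ∈ s, 0 < i) (hsum : s.sum = 2 * d - 1)
    (hodd : s.countP (fun i => Odd i) = 3) : Yv d :=
  ⟨⟨s, fun h => hpos _ h, hsum⟩, hodd⟩

lemma Xext {d : ℕ} (x x' : Xv d) (h : x.1.parts = x'.1.parts) : x = x' :=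
  Subtype.ext (Nat.Partition.ext h)

lemma exX {d : ℕ} (s : Multiset ℕ) (hpos : ∀ i ∈ s, 0 < i) (hsum : s.sum = 2 * d)
    (heven : ∀ i ∈ s, i % 2 = 0) (hcard : 2 ≤ Multiset.card s) :
    ∃ x : Xv d, x.1.parts = s :=
  ⟨mkX d s hpos hsum (fun i hi => Nat.even_iff.2 (heven i hi))
    (by intro h; rw [h, card_singleton] at hcard; omega), rfl⟩

lemma adjXY {d : ℕ} {x : Xv d} {y : Yv d} (h : moveRel d x y) :
    (Gd d).Adj (Sum.inl x) (Sum.inr y) := Or.inl ⟨x, y, rfl, rfl, h⟩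

lemma merge_reach {d : ℕ} (w u : ℕ) (t : Multiset ℕ) (x x' : Xv d)
    (hx : x.1.parts = 2 ::ₘ w ::ₘ u ::ₘ t)
    (hx' : x'.1.parts = w ::ₘ (u + 2) ::ₘ t) :
    (Gd d).Reachable (Sum.inl x) (Sum.inl x') := by
  have hme : ∀ i ∈ x.1.parts, Even i := x.2.1
  have hw : w % 2 = 0 := Nat.even_iff.mp (hme w (by rw [hx]; simp))
  have hu : u % 2 = 0 := Nat.even_iff.mp (hme u (by rw [hx]; simp))
  have hwpos : 0 < w := x.1.parts_pos (by rw [hx]; simp)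
  have hupos : 0 < u := x.1.parts_pos (by rw [hx]; simp)
  have htpos : ∀ i ∈ t, 0 < i := fun i hi => x.1.parts_pos (by rw [hx]; simp [hi])
  have hte : ∀ i ∈ t, i % 2 = 0 := fun i hi => Nat.even_iff.mp (hme i (by rw [hx]; simp [hi]))
  have hsum : (2 ::ₘ w ::ₘ u ::ₘ t).sum = 2 * d := by
    rw [← hx]; exact x.1.parts_sum
  obtain ⟨y, hy⟩ : ∃ y : Yv d, y.1.parts = 1 ::ₘ (w - 1) ::ₘ (u + 1) ::ₘ t :=
  ⟨mkY d (1 ::ₘ (w - 1) ::ₘ (u + 1) ::ₘ t)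
    (by intro i hi
        simp only [mem_cons] at hi
        rcases hi with rfl | rfl | rfl | hi
        · omega
        · omega
        · omega
        · exact htpos i hi)
    (by
      have h1 : (1 ::ₘ (w - 1) ::ₘ (u + 1) ::ₘ t).sum = (2 ::ₘ w ::ₘ u ::ₘ t).sum - 1 := by
        simp only [sum_cons]; omega
      rw [h1, hsum])
    (by
      have he0 : countP (fun i => Odd i) t = 0 := countP_eq_zero.2 (fun a ha => by
        rw [Nat.odd_iff]; have := hte a ha; omega)
      have o1 : Odd (1 : ℕ) := by decide
      have o2 : Odd (w - 1) := by rw [Nat.odd_iff]; omega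
      have o3 : Odd (u + 1) := by rw [Nat.odd_iff]; omega
      simp [countP_cons, he0, o1, o2, o3]), rfl⟩
  have mv1 : moveRel d x y :=
    ⟨2, w, u ::ₘ t, hx, Or.inl ⟨u, mem_cons_self u t, by
      rw [hy, erase_cons_head]⟩⟩
  have mv2 : moveRel d x' y := by
    refine ⟨u + 2, w, t, by rw [hx', cons_swap], Or.inr ?_⟩
    rw [hy]
    show 1 ::ₘ (w - 1) ::ₘ (u + 1) ::ₘ t = (u + 2 - 1) ::ₘ (w - 1) ::ₘ 1 ::ₘ t
    rw [show u + 2 - 1 = u + 1 from rfl, cons_swap 1 (w - 1), cons_swap 1 (u + 1),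
      cons_swap (w - 1) (u + 1)]
  exact (adjXY mv1).reachable.trans (adjXY mv2).reachable.symm

lemma swap_reach {d : ℕ} (a b : ℕ) (t : Multiset ℕ) (x x' : Xv d) (hb : 4 ≤ b)
    (hx : x.1.parts = a ::ₘ b ::ₘ t)
    (hx' : x'.1.parts = (a + 2) ::ₘ (b - 2) ::ₘ t) :
    (Gd d).Reachable (Sum.inl x) (Sum.inl x') := by
  have hme : ∀ i ∈ x.1.parts, Even i := x.2.1
  have ha : a % 2 = 0 := Nat.even_iff.mp (hme a (by rw [hx]; simp))
  have hbe : b % 2 = 0 := Nat.even_iff.mp (hme b (by rw [hx]; simp))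
  have hapos : 0 < a := x.1.parts_pos (by rw [hx]; simp)
  have htpos : ∀ i ∈ t, 0 < i := fun i hi => x.1.parts_pos (by rw [hx]; simp [hi])
  have hte : ∀ i ∈ t, i % 2 = 0 := fun i hi => Nat.even_iff.mp (hme i (by rw [hx]; simp [hi]))
  have hsum : (a ::ₘ b ::ₘ t).sum = 2 * d := by rw [← hx]; exact x.1.parts_sum
  obtain ⟨z, hz⟩ : ∃ z : Xv d, z.1.parts = 2 ::ₘ a ::ₘ (b - 2) ::ₘ t := by
    refine exX _ ?_ ?_ ?_ ?_
    · intro i hi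
      simp only [mem_cons] at hi
      rcases hi with rfl | rfl | rfl | hi
      · omega
      · omega
      · omega
      · exact htpos i hi
    · have h1 : (2 ::ₘ a ::ₘ (b - 2) ::ₘ t).sum = (a ::ₘ b ::ₘ t).sum := by
        simp only [sum_cons]; omega
      rw [h1, hsum]
    · intro i hi
      simp only [mem_cons] at hi
      rcases hi with rfl | rfl | rfl | hi
      · omega
      · omega
      · omega
      · exact hte i hi
    · simp
  have r1 : (Gd d).Reachable (Sum.inl z) (Sum.inl x) := by
    refine merge_reach a (b - 2) t z x hz ?_
    rw [hx, Nat.sub_add_cancel (by omega : 2 ≤ b)]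
  have r2 : (Gd d).Reachable (Sum.inl z) (Sum.inl x') := by
    refine merge_reach (b - 2) a t z x' ?_ ?_
    · rw [hz, cons_swap a (b - 2)]
    · rw [hx', cons_swap]
  exact r1.symm.trans r2

lemma pair_reach {d : ℕ} (hd : 2 ≤ d) (x₀ : Xv d)
    (h0 : x₀.1.parts = (2 * d - 2) ::ₘ 2 ::ₘ 0) :
    ∀ b a (x : Xv d), x.1.parts = a ::ₘ b ::ₘ 0 →
      (Gd d).Reachable (Sum.inl x) (Sum.inl x₀) := by
  intro b
  induction b using Nat.strong_induction_on with
  | _ b ih =>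
    intro a x hx
    have hbpos : 0 < b := x.1.parts_pos (by rw [hx]; simp)
    have hbe : b % 2 = 0 := Nat.even_iff.mp (x.2.1 b (by rw [hx]; simp))
    have hae : a % 2 = 0 := Nat.even_iff.mp (x.2.1 a (by rw [hx]; simp))
    have hapos : 0 < a := x.1.parts_pos (by rw [hx]; simp)
    have hsum : (a ::ₘ b ::ₘ (0 : Multiset ℕ)).sum = 2 * d := by
      rw [← hx]; exact x.1.parts_sum
    simp only [sum_cons, Multiset.sum_zero] at hsum
    by_cases hb : b = 2
    · subst hb
      have hxx : x = x₀ := Xext x x₀ (by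
        rw [hx, h0, show a = 2 * d - 2 by omega])
      rw [hxx]
    · have hb4 : 4 ≤ b := by omega
      obtain ⟨x1, hx1⟩ : ∃ x1 : Xv d, x1.1.parts = (a + 2) ::ₘ (b - 2) ::ₘ 0 := by
        refine exX _ ?_ ?_ ?_ (by simp)
        · intro i hi; simp only [mem_cons] at hi
          rcases hi with rfl | rfl | hi
          · omega
          · omega
          · simp at hi
        · simp only [sum_cons, Multiset.sum_zero]; omega
        · intro i hi; simp only [mem_cons] at hi
          rcases hi with rfl | rfl | hi
          · omega
          · omega
          · simp at hi
      exact (swap_reach a b 0 x x1 hb4 hx hx1).trans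
        (ih (b - 2) (by omega) (a + 2) x1 hx1)

lemma drop_card {d : ℕ} :
    ∀ w u v (t : Multiset ℕ) (x : Xv d), x.1.parts = u ::ₘ v ::ₘ w ::ₘ t →
      ∃ x' : Xv d, Multiset.card x'.1.parts + 1 = Multiset.card x.1.parts ∧
        (Gd d).Reachable (Sum.inl x) (Sum.inl x') := by
  intro w
  induction w using Nat.strong_induction_on with
  | _ w ih =>
    intro u v t x hx
    have hme : ∀ i ∈ x.1.parts, Even i := x.2.1
    have hwe : w % 2 = 0 := Nat.even_iff.mp (hme w (by rw [hx]; simp))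
    have hue : u % 2 = 0 := Nat.even_iff.mp (hme u (by rw [hx]; simp))
    have hve : v % 2 = 0 := Nat.even_iff.mp (hme v (by rw [hx]; simp))
    have hwpos : 0 < w := x.1.parts_pos (by rw [hx]; simp)
    have hupos : 0 < u := x.1.parts_pos (by rw [hx]; simp)
    have hvpos : 0 < v := x.1.parts_pos (by rw [hx]; simp)
    have htpos : ∀ i ∈ t, 0 < i := fun i hi => x.1.parts_pos (by rw [hx]; simp [hi])
    have hte : ∀ i ∈ t, i % 2 = 0 := fun i hi => Nat.even_iff.mp (hme i (by rw [hx]; simp [hi]))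
    have hsum : (u ::ₘ v ::ₘ w ::ₘ t).sum = 2 * d := by rw [← hx]; exact x.1.parts_sum
    by_cases hw : w = 2
    · subst hw
      obtain ⟨x', hx'⟩ : ∃ x' : Xv d, x'.1.parts = u ::ₘ (v + 2) ::ₘ t := by
        refine exX _ ?_ ?_ ?_ (by simp)
        · intro i hi; simp only [mem_cons] at hi
          rcases hi with rfl | rfl | hi
          · omega
          · omega
          · exact htpos i hi
        · have h1 : (u ::ₘ (v + 2) ::ₘ t).sum = (u ::ₘ v ::ₘ 2 ::ₘ t).sum := by
            simp only [sum_cons]; omega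
          rw [h1, hsum]
        · intro i hi; simp only [mem_cons] at hi
          rcases hi with rfl | rfl | hi
          · omega
          · omega
          · exact hte i hi
      refine ⟨x', ?_, merge_reach u v t x x' ?_ hx'⟩
      · rw [hx, hx']; simp
      · rw [hx, cons_swap v 2, cons_swap u 2]
    · have hw4 : 4 ≤ w := by omega
      obtain ⟨x1, hx1⟩ : ∃ x1 : Xv d, x1.1.parts = (u + 2) ::ₘ v ::ₘ (w - 2) ::ₘ t := by
        refine exX _ ?_ ?_ ?_ (by simp)
        · intro i hi; simp only [mem_cons] at hi
          rcases hi with rfl | rfl | rfl | hi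
          · omega
          · omega
          · omega
          · exact htpos i hi
        · have h1 : ((u + 2) ::ₘ v ::ₘ (w - 2) ::ₘ t).sum = (u ::ₘ v ::ₘ w ::ₘ t).sum := by
            simp only [sum_cons]; omega
          rw [h1, hsum]
        · intro i hi; simp only [mem_cons] at hi
          rcases hi with rfl | rfl | rfl | hi
          · omega
          · omega
          · omega
          · exact hte i hi
      have r1 : (Gd d).Reachable (Sum.inl x) (Sum.inl x1) := by
        refine swap_reach u w (v ::ₘ t) x x1 hw4 ?_ ?_
        · rw [hx, cons_swap v w]
        · rw [hx1, cons_swap v (w - 2)]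
      obtain ⟨x', hc, r2⟩ := ih (w - 2) (by omega) (u + 2) v t x1 hx1
      refine ⟨x', ?_, r1.trans r2⟩
      rw [hx1] at hc
      rw [hx]
      simp only [card_cons] at hc ⊢
      omega

lemma allX_reach {d : ℕ} (hd : 2 ≤ d) (x₀ : Xv d)
    (h0 : x₀.1.parts = (2 * d - 2) ::ₘ 2 ::ₘ 0) :
    ∀ n (x : Xv d), Multiset.card x.1.parts = n →
      (Gd d).Reachable (Sum.inl x) (Sum.inl x₀) := by
  intro n
  induction n using Nat.strong_induction_on with
  | _ n ih =>
    intro x hn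
    have hsum : x.1.parts.sum = 2 * d := x.1.parts_sum
    have hne : x.1.parts ≠ 0 := by
      intro h; rw [h] at hsum; simp at hsum; omega
    have hn1 : 1 ≤ n := by
      rcases Nat.eq_zero_or_pos n with h | h
      · exfalso; exact hne (card_eq_zero.1 (hn.trans h))
      · exact h
    by_cases h1 : n = 1
    · exfalso
      obtain ⟨a, ha⟩ := card_eq_one.1 (hn.trans (by rw [h1]))
      have : a = 2 * d := by rw [ha] at hsum; simpa using hsum
      exact x.2.2 (by rw [ha, this])
    by_cases h2 : n = 2
    · obtain ⟨a, b, hab⟩ := card_eq_two.1 (hn.trans (by rw [h2]))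
      exact pair_reach hd x₀ h0 b a x (by rw [hab]; rfl)
    · have hn3 : 3 ≤ n := by omega
      obtain ⟨u, t1, h1'⟩ : ∃ u t1, x.1.parts = u ::ₘ t1 := by
        obtain ⟨a, ha⟩ := exists_mem_of_ne_zero hne
        exact ⟨a, _, (exists_cons_of_mem ha).choose_spec⟩
      have hct1 : Multiset.card t1 = n - 1 := by
        rw [h1'] at hn; simp only [card_cons] at hn; omega
      obtain ⟨v, t2, h2'⟩ : ∃ v t2, t1 = v ::ₘ t2 := by
        have : t1 ≠ 0 := by intro h; rw [h] at hct1; simp at hct1; omega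
        obtain ⟨a, ha⟩ := exists_mem_of_ne_zero this
        exact ⟨a, _, (exists_cons_of_mem ha).choose_spec⟩
      have hct2 : Multiset.card t2 = n - 2 := by
        rw [h2'] at hct1; simp only [card_cons] at hct1; omega
      obtain ⟨w, t3, h3'⟩ : ∃ w t3, t2 = w ::ₘ t3 := by
        have : t2 ≠ 0 := by intro h; rw [h] at hct2; simp at hct2; omega
        obtain ⟨a, ha⟩ := exists_mem_of_ne_zero this
        exact ⟨a, _, (exists_cons_of_mem ha).choose_spec⟩
      have hx : x.1.parts = u ::ₘ v ::ₘ w ::ₘ t3 := by rw [h1', h2', h3']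
      obtain ⟨x', hc, r⟩ := drop_card w u v t3 x hx
      have hcx' : Multiset.card x'.1.parts = n - 1 := by omega
      exact r.trans (ih (n - 1) (by omega) x' hcx')

lemma y_adj {d : ℕ} (hd : 2 ≤ d) (y : Yv d) : ∃ x : Xv d, moveRel d x y := by
  have h3 : Multiset.countP (fun i => Odd i) y.1.parts = 3 := y.2
  have hcard : Multiset.card (y.1.parts.filter (fun i => Odd i)) = 3 := by
    rw [← countP_eq_card_filter]; exact h3
  obtain ⟨a, b, c, habc⟩ := card_eq_three.1 hcard
  set e := y.1.parts.filter (fun i => ¬ Odd i) with he_def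
  have hP : y.1.parts = a ::ₘ b ::ₘ c ::ₘ e := by
    conv_lhs => rw [← filter_add_not (fun i => Odd i) y.1.parts]
    rw [habc, he_def]
    simp only [insert_eq_cons, cons_add, singleton_add]
  have hao : a % 2 = 1 := by
    have : a ∈ y.1.parts.filter (fun i => Odd i) := by rw [habc]; simp
    exact Nat.odd_iff.1 (of_mem_filter this)
  have hbo : b % 2 = 1 := by
    have : b ∈ y.1.parts.filter (fun i => Odd i) := by rw [habc]; simp
    exact Nat.odd_iff.1 (of_mem_filter this)
  have hco : c % 2 = 1 := by
    have : c ∈ y.1.parts.filter (fun i => Odd i) := by rw [habc]; simp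
    exact Nat.odd_iff.1 (of_mem_filter this)
  have hee : ∀ i ∈ e, i % 2 = 0 := by
    intro i hi
    have := of_mem_filter hi
    rw [Nat.odd_iff] at this
    omega
  have hepos : ∀ i ∈ e, 0 < i := fun i hi =>
    y.1.parts_pos (mem_of_mem_filter hi)
  have hsum : (a ::ₘ b ::ₘ c ::ₘ e).sum = 2 * d - 1 := by
    rw [← hP]; exact y.1.parts_sum
  simp only [sum_cons] at hsum
  by_cases hc : c = 1
  · obtain ⟨x, hx⟩ : ∃ x : Xv d, x.1.parts = (a + 1) ::ₘ (b + 1) ::ₘ e := by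
      refine exX _ ?_ ?_ ?_ (by simp)
      · intro i hi; simp only [mem_cons] at hi
        rcases hi with rfl | rfl | hi
        · omega
        · omega
        · exact hepos i hi
      · simp only [sum_cons]; omega
      · intro i hi; simp only [mem_cons] at hi
        rcases hi with rfl | rfl | hi
        · omega
        · omega
        · exact hee i hi
    refine ⟨x, a + 1, b + 1, e, hx, Or.inr ?_⟩
    rw [hP, hc]
    simp
  · have hc3 : 3 ≤ c := by omega
    obtain ⟨x, hx⟩ : ∃ x : Xv d, x.1.parts = (a + 1) ::ₘ (b + 1) ::ₘ (c - 1) ::ₘ e := by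
      refine exX _ ?_ ?_ ?_ (by simp)
      · intro i hi; simp only [mem_cons] at hi
        rcases hi with rfl | rfl | rfl | hi
        · omega
        · omega
        · omega
        · exact hepos i hi
      · simp only [sum_cons]; omega
      · intro i hi; simp only [mem_cons] at hi
        rcases hi with rfl | rfl | rfl | hi
        · omega
        · omega
        · omega
        · exact hee i hi
    refine ⟨x, a + 1, b + 1, (c - 1) ::ₘ e, hx, Or.inl ⟨c - 1, mem_cons_self _ _, ?_⟩⟩
    rw [erase_cons_head, hP, Nat.sub_add_cancel (by omega : 1 ≤ c)]
    simp

end Stmt11Aux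

open Stmt11Aux in
/-- For `d ≥ 2`, the bipartite graph `G_d` is connected. -/
theorem stmt11 (d : ℕ) (hd : 2 ≤ d) : (Gd d).Connected := by
  obtain ⟨x₀, h0⟩ : ∃ x₀ : Xv d, x₀.1.parts = (2 * d - 2) ::ₘ 2 ::ₘ 0 := by
    refine exX _ ?_ ?_ ?_ (by simp)
    · intro i hi; simp only [Multiset.mem_cons] at hi
      rcases hi with rfl | rfl | hi
      · omega
      · omega
      · simp at hi
    · simp only [Multiset.sum_cons, Multiset.sum_zero]; omega
    · intro i hi; simp only [Multiset.mem_cons] at hi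
      rcases hi with rfl | rfl | hi
      · omega
      · omega
      · simp at hi
  have hX : ∀ x : Xv d, (Gd d).Reachable (Sum.inl x) (Sum.inl x₀) :=
    fun x => allX_reach hd x₀ h0 _ x rfl
  have hall : ∀ u : Xv d ⊕ Yv d, (Gd d).Reachable u (Sum.inl x₀) := by
    intro u
    cases u with
    | inl x => exact hX x
    | inr y =>
      obtain ⟨x, mv⟩ := y_adj hd y
      have hadj : (Gd d).Adj (Sum.inr y) (Sum.inl x) := Or.inr ⟨x, y, rfl, rfl, mv⟩
      exact hadj.reachable.trans (hX x)
  rw [SimpleGraph.connected_iff]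
  exact ⟨fun u v => (hall u).trans (hall v).symm, ⟨Sum.inl x₀⟩⟩
end
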